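/- Let ρ, λ > 0 with λm > ρ, where m = ∫₀^∞ y p(y) dy for a probability density p on (0,∞) that is not concentrated at 0. Then the function H(α) = ρα + λ∫₀^∞(e^{-αy} - 1)p(y) dy has a unique root α > 0, besides the trivial root α = 0. -/

import Mathlib

open MeasureTheory Set Filter Topology

lemma key_mono {a b y : ℝ} (ha : 0 < a) (hab : a < b) (hy : 0 < y) :
    b * (Real.exp (-(a*y)) - 1) < a * (Real.exp (-(b*y)) - 1) := by
  set c : ℝ := 1 - Real.exp (-(a*y)) with hc
  set g : ℝ → ℝ := fun t => a * Real.exp (-(t*y)) - a + t * c with hg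
  have hd : ∀ t : ℝ, HasDerivAt g (-(a * (Real.exp (-(t*y)) * y)) + c) t := by
    intro t
    have h1 : HasDerivAt (fun t : ℝ => -(t*y)) (-y) t := by
      have h := ((hasDerivAt_id t).mul_const y).neg
      simp only [one_mul] at h
      exact h
    have h2 : HasDerivAt (fun t : ℝ => Real.exp (-(t*y))) (Real.exp (-(t*y)) * (-y)) t := h1.exp
    have := ((h2.const_mul a).sub_const a).add ((hasDerivAt_id t).mul_const c)
    exact this.congr_deriv (by ring)
  have hmono : StrictMonoOn g (Ici a) := by
    apply strictMonoOn_of_deriv_pos (convex_Ici a)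
    · exact fun t _ => ((hd t).continuousAt).continuousWithinAt
    · intro t ht
      rw [interior_Ici] at ht
      have hta : a < t := ht
      rw [(hd t).deriv]
      have h1 : a * (Real.exp (-(t*y)) * y) < a * y * Real.exp (-(a*y)) := by
        have hee : Real.exp (-(t*y)) < Real.exp (-(a*y)) := by
          apply Real.exp_lt_exp.2
          nlinarith
        nlinarith [mul_pos ha hy, Real.exp_pos (-(t*y))]
      have h2 : (a*y) * Real.exp (-(a*y)) ≤ 1 - Real.exp (-(a*y)) := by
        have h3 := Real.add_one_le_exp (a*y)
        have h4 : Real.exp (-(a*y)) * Real.exp (a*y) = 1 := by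
          rw [← Real.exp_add]; simp
        have h5 : (0:ℝ) < Real.exp (-(a*y)) := Real.exp_pos _
        nlinarith
      simp only [hc]
      nlinarith
  have := hmono (self_mem_Ici) (le_of_lt hab) hab
  have hga : g a = 0 := by simp only [hg, hc]; ring
  have hgb : g b = a * Real.exp (-(b*y)) - a + b * (1 - Real.exp (-(a*y))) := rfl
  rw [hga, hgb] at this
  nlinarith

lemma aux_int {p : ℝ → ℝ} (hint : IntegrableOn p (Ioi 0)) {α : ℝ} (hα : 0 ≤ α) :
    IntegrableOn (fun y => (Real.exp (-α*y) - 1) * p y) (Ioi 0) := by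
  refine Integrable.mono hint ?_ ?_
  · have hcc : Continuous fun y : ℝ => Real.exp (-α * y) - 1 :=
      (Real.continuous_exp.comp (continuous_const.mul continuous_id)).sub continuous_const
    exact hcc.aestronglyMeasurable.mul hint.aestronglyMeasurable
  · filter_upwards [ae_restrict_mem measurableSet_Ioi] with y hy
    have hy' : (0:ℝ) < y := hy
    have h1 : Real.exp (-α*y) ≤ 1 := by
      rw [Real.exp_le_one_iff]
      nlinarith
    have h2 : (0:ℝ) < Real.exp (-α*y) := Real.exp_pos _
    rw [Real.norm_eq_abs, Real.norm_eq_abs, abs_mul]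
    calc |Real.exp (-α*y) - 1| * |p y| ≤ 1 * |p y| := by
          apply mul_le_mul_of_nonneg_right _ (abs_nonneg _)
          rw [abs_le]; constructor <;> nlinarith
      _ = |p y| := one_mul _

set_option maxHeartbeats 1000000 in
theorem stmt_13 (ρ lam : ℝ) (hρ : 0 < ρ) (hlam : 0 < lam)
    (p : ℝ → ℝ) (hp : ∀ y ∈ Ioi (0:ℝ), 0 ≤ p y)
    (hint : IntegrableOn p (Ioi 0))
    (hprob : ∫ y in Ioi (0:ℝ), p y = 1)
    (hmom : IntegrableOn (fun y => y * p y) (Ioi 0))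
    (hnz : ¬ (∀ᵐ y ∂(volume.restrict (Ioi (0:ℝ))), p y = 0))
    (hmean : ρ < lam * ∫ y in Ioi (0:ℝ), y * p y) :
    ∃! α : ℝ, 0 < α ∧
      ρ * α + lam * (∫ y in Ioi (0:ℝ), (Real.exp (-α * y) - 1) * p y) = 0 := by
  set H : ℝ → ℝ := fun α => ρ * α + lam * (∫ y in Ioi (0:ℝ), (Real.exp (-α * y) - 1) * p y)
    with hH
  -- Step C: find M with truncated mean still > ρ/lam
  have hUnion : (⋃ n : ℕ, Ioc (0:ℝ) n) = Ioi 0 := by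
    ext y
    simp only [mem_iUnion, mem_Ioc, mem_Ioi]
    constructor
    · rintro ⟨n, h1, _⟩; exact h1
    · intro h; obtain ⟨n, hn⟩ := exists_nat_ge y; exact ⟨n, h, hn⟩
  have htend : Tendsto (fun n : ℕ => ∫ y in Ioc (0:ℝ) n, y * p y) atTop
      (𝓝 (∫ y in Ioi (0:ℝ), y * p y)) := by
    have := tendsto_setIntegral_of_monotone (f := fun y => y * p y) (μ := volume)
      (s := fun n : ℕ => Ioc (0:ℝ) n) (fun n => measurableSet_Ioc)
      (fun i j hij => Ioc_subset_Ioc le_rfl (by exact_mod_cast hij)) (by rw [hUnion]; exact hmom)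
    rwa [hUnion] at this
  have hM : ∃ M : ℝ, ρ < lam * ∫ y in Ioc (0:ℝ) M, y * p y := by
    have h2 : Tendsto (fun n : ℕ => lam * ∫ y in Ioc (0:ℝ) n, y * p y) atTop
        (𝓝 (lam * ∫ y in Ioi (0:ℝ), y * p y)) := htend.const_mul lam
    obtain ⟨n, hn⟩ := (h2.eventually (eventually_gt_nhds hmean)).exists
    exact ⟨n, hn⟩
  obtain ⟨M, hMmean⟩ := hM
  set mM : ℝ := ∫ y in Ioc (0:ℝ) M, y * p y with hmM
  -- Step: find small α₀ with H α₀ < 0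
  have hsmall : ∃ α₀ : ℝ, 0 < α₀ ∧ ρ < lam * Real.exp (-α₀*M) * mM := by
    have hc : Tendsto (fun α : ℝ => lam * Real.exp (-α*M) * mM) (𝓝[>] 0)
        (𝓝 (lam * Real.exp (-(0:ℝ)*M) * mM)) := by
      apply Tendsto.mono_left _ nhdsWithin_le_nhds
      have hcc : Continuous fun α : ℝ => lam * Real.exp (-α*M) * mM :=
        (continuous_const.mul (Real.continuous_exp.comp
          ((continuous_id.neg).mul continuous_const))).mul continuous_const
      exact hcc.tendsto 0
    have h0 : ρ < lam * Real.exp (-(0:ℝ)*M) * mM := by simpa using hMmean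
    obtain ⟨α₀, h1, h2⟩ := ((hc.eventually (eventually_gt_nhds h0)).and
      self_mem_nhdsWithin).exists
    exact ⟨α₀, h2, h1⟩
  obtain ⟨α₀, hα₀pos, hα₀⟩ := hsmall
  have hHneg : H α₀ < 0 := by
    have hbound : (∫ y in Ioi (0:ℝ), (Real.exp (-α₀ * y) - 1) * p y)
        ≤ -(α₀ * Real.exp (-α₀*M)) * mM := by
      have hg_int : IntegrableOn
          (fun y => (Ioc (0:ℝ) M).indicator (fun y => -(α₀ * Real.exp (-α₀*M)) * (y * p y)) y)
          (Ioi 0) := (hmom.const_mul _).indicator measurableSet_Ioc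
      have hle := setIntegral_mono_on (aux_int hint hα₀pos.le) hg_int measurableSet_Ioi ?_
      · refine hle.trans_eq ?_
        rw [integral_indicator measurableSet_Ioc, Measure.restrict_restrict measurableSet_Ioc]
        have : Ioc (0:ℝ) M ∩ Ioi 0 = Ioc 0 M := by
          ext y; simp only [mem_inter_iff, mem_Ioc, mem_Ioi]
          exact ⟨fun h => h.1, fun h => ⟨h, h.1⟩⟩
        rw [this, integral_const_mul]
      · intro y hy
        have hy' : (0:ℝ) < y := hy
        by_cases hyM : y ≤ M
        · rw [indicator_of_mem (by exact ⟨hy', hyM⟩)]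
          have hpy := hp y hy
          have key : Real.exp (-α₀ * y) - 1 ≤ -(α₀ * Real.exp (-α₀*M)) * y := by
            have e1 : Real.exp (-α₀*y) - 1 ≤ -(α₀*y) * Real.exp (-(α₀*y)) := by
              have h3 := Real.add_one_le_exp (α₀*y)
              have h4 : Real.exp (-(α₀*y)) * Real.exp (α₀*y) = 1 := by
                rw [← Real.exp_add]; simp
              have h5 : (0:ℝ) < Real.exp (-(α₀*y)) := Real.exp_pos _
              have : Real.exp (-α₀*y) = Real.exp (-(α₀*y)) := by ring_nf
              rw [this]
              nlinarith
            have e2 : Real.exp (-α₀*M) ≤ Real.exp (-(α₀*y)) := by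
              apply Real.exp_le_exp.2
              nlinarith
            nlinarith [mul_pos hα₀pos hy']
          calc (Real.exp (-α₀ * y) - 1) * p y ≤ (-(α₀ * Real.exp (-α₀*M)) * y) * p y :=
                mul_le_mul_of_nonneg_right key hpy
            _ = -(α₀ * Real.exp (-α₀*M)) * (y * p y) := by ring
        · rw [indicator_of_notMem (by simp [hyM])]
          have hpy := hp y hy
          have : Real.exp (-α₀ * y) ≤ 1 := by
            rw [Real.exp_le_one_iff]; nlinarith
          nlinarith
    have : H α₀ ≤ ρ * α₀ + lam * (-(α₀ * Real.exp (-α₀*M)) * mM) := by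
      simp only [hH]
      nlinarith
    nlinarith [Real.exp_pos (-α₀*M)]
  -- Step: large α₁
  set α₁ : ℝ := max ((lam + 1)/ρ) α₀ with hα₁
  have hα₀₁ : α₀ ≤ α₁ := le_max_right _ _
  have hα₁pos : 0 < α₁ := lt_of_lt_of_le hα₀pos hα₀₁
  have hHpos : 0 < H α₁ := by
    have hbound : -1 ≤ ∫ y in Ioi (0:ℝ), (Real.exp (-α₁ * y) - 1) * p y := by
      have h1 : (∫ y in Ioi (0:ℝ), -p y) ≤ ∫ y in Ioi (0:ℝ), (Real.exp (-α₁ * y) - 1) * p y := by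
        apply setIntegral_mono_on hint.neg (aux_int hint hα₁pos.le) measurableSet_Ioi
        intro y hy
        have hy' : (0:ℝ) < y := hy
        have hpy := hp y hy
        have h2 : (0:ℝ) < Real.exp (-α₁*y) := Real.exp_pos _
        show -p y ≤ (Real.exp (-α₁ * y) - 1) * p y
        nlinarith
      rwa [integral_neg, hprob] at h1
    have h3 : (lam + 1)/ρ ≤ α₁ := le_max_left _ _
    have h4 : lam + 1 ≤ ρ * α₁ := by
      rw [div_le_iff₀ hρ] at h3; linarith
    simp only [hH]
    nlinarith
  -- Step: continuity of H on Icc α₀ α₁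
  have hHcont : ContinuousOn H (Icc α₀ α₁) := by
    intro x hx
    have hxpos : 0 < x := lt_of_lt_of_le hα₀pos hx.1
    apply ContinuousAt.continuousWithinAt
    have hI : ContinuousAt (fun α : ℝ => ∫ y in Ioi (0:ℝ), (Real.exp (-α * y) - 1) * p y) x := by
      apply continuousAt_of_dominated (bound := fun y => ‖p y‖)
      · filter_upwards with α
        have hcc : Continuous fun y : ℝ => Real.exp (-α * y) - 1 :=
          (Real.continuous_exp.comp (continuous_const.mul continuous_id)).sub continuous_const
        exact hcc.aestronglyMeasurable.mul hint.aestronglyMeasurable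
      · filter_upwards [eventually_gt_nhds hxpos] with α hα
        filter_upwards [ae_restrict_mem measurableSet_Ioi] with y hy
        have hy' : (0:ℝ) < y := hy
        have h1 : Real.exp (-α*y) ≤ 1 := by rw [Real.exp_le_one_iff]; nlinarith
        have h2 : (0:ℝ) < Real.exp (-α*y) := Real.exp_pos _
        rw [Real.norm_eq_abs, Real.norm_eq_abs, abs_mul]
        calc |Real.exp (-α*y) - 1| * |p y| ≤ 1 * |p y| := by
              apply mul_le_mul_of_nonneg_right _ (abs_nonneg _)
              rw [abs_le]; constructor <;> nlinarith
          _ = |p y| := one_mul _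
      · exact hint.norm
      · filter_upwards with y
        have hcc : Continuous fun α : ℝ => (Real.exp (-α * y) - 1) * p y :=
          ((Real.continuous_exp.comp ((continuous_id.neg).mul continuous_const)).sub
            continuous_const).mul continuous_const
        exact hcc.continuousAt
    exact (continuousAt_const.mul continuousAt_id).add (continuousAt_const.mul hI)
  -- IVT
  have hivt : ∃ c ∈ Icc α₀ α₁, H c = 0 := by
    have h0mem : (0:ℝ) ∈ Icc (H α₀) (H α₁) := ⟨hHneg.le, hHpos.le⟩
    obtain ⟨c, hc1, hc2⟩ := intermediate_value_Icc hα₀₁ hHcont h0mem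
    exact ⟨c, hc1, hc2⟩
  obtain ⟨c, hcmem, hcroot⟩ := hivt
  have hcpos : 0 < c := lt_of_lt_of_le hα₀pos hcmem.1
  -- Uniqueness pairwise
  have huniq : ∀ a b : ℝ, 0 < a → a < b → H a = 0 → H b = 0 → False := by
    intro a b ha hab hra hrb
    set Ia : ℝ := ∫ y in Ioi (0:ℝ), (Real.exp (-a * y) - 1) * p y with hIa
    set Ib : ℝ := ∫ y in Ioi (0:ℝ), (Real.exp (-b * y) - 1) * p y with hIb
    have hb : 0 < b := ha.trans hab
    have hfa : IntegrableOn (fun y => (Real.exp (-a * y) - 1) * p y) (Ioi 0) :=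
      aux_int hint ha.le
    have hfb : IntegrableOn (fun y => (Real.exp (-b * y) - 1) * p y) (Ioi 0) :=
      aux_int hint hb.le
    set f : ℝ → ℝ := fun y => a * ((Real.exp (-b * y) - 1) * p y)
      - b * ((Real.exp (-a * y) - 1) * p y) with hf
    have hfint : IntegrableOn f (Ioi 0) := (hfb.const_mul a).sub (hfa.const_mul b)
    have hfval : (∫ y in Ioi (0:ℝ), f y) = a * Ib - b * Ia := by
      rw [integral_sub (hfb.const_mul a) (hfa.const_mul b), integral_const_mul, integral_const_mul]
    have heq : a * Ib - b * Ia = 0 := by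
      have h1 : ρ * a + lam * Ia = 0 := hra
      have h2 : ρ * b + lam * Ib = 0 := hrb
      have h3 : lam * (a * Ib - b * Ia) = 0 := by nlinarith
      rcases mul_eq_zero.mp h3 with h | h
      · exact absurd h (ne_of_gt hlam)
      · exact h
    have hnonneg : 0 ≤ᵐ[volume.restrict (Ioi (0:ℝ))] f := by
      filter_upwards [ae_restrict_mem measurableSet_Ioi] with y hy
      have hy' : (0:ℝ) < y := hy
      have hk := key_mono ha hab hy'
      have hpy := hp y hy
      show 0 ≤ a * ((Real.exp (-b * y) - 1) * p y) - b * ((Real.exp (-a * y) - 1) * p y)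
      rw [show -a*y = -(a*y) from by ring, show -b*y = -(b*y) from by ring]
      nlinarith
    have hzero : f =ᵐ[volume.restrict (Ioi (0:ℝ))] 0 := by
      rw [← integral_eq_zero_iff_of_nonneg_ae hnonneg hfint]
      rw [hfval, heq]
    apply hnz
    filter_upwards [hzero, ae_restrict_mem measurableSet_Ioi] with y h1 h2
    have hy' : (0:ℝ) < y := h2
    have hk := key_mono ha hab hy'
    have h1' : a * ((Real.exp (-b * y) - 1) * p y)
        - b * ((Real.exp (-a * y) - 1) * p y) = 0 := h1
    rw [show -a*y = -(a*y) from by ring, show -b*y = -(b*y) from by ring] at h1'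
    by_contra hpy0
    have hpy := hp y h2
    have hpy' : 0 < p y := lt_of_le_of_ne hpy (Ne.symm hpy0)
    nlinarith
  refine ⟨c, ⟨hcpos, hcroot⟩, ?_⟩
  rintro b ⟨hbpos, hbroot⟩
  by_contra hne
  rcases lt_or_gt_of_ne hne with h | h
  · exact huniq b c hbpos h hbroot hcroot
  · exact huniq c b hcpos h hcroot hbroot
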